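/- Let ⟨·,·⟩ be a bilinear form on ℂ^m with matrix A, and let η satisfy ηᵀA + Aη = 0. If v, w ∈ ℂ^m satisfy ⟨η^i v, η^j w⟩ = 0 whenever i + j ≤ k, then for all t ∈ ℂ the osculating spaces E(t) = span{d^i/dt^i exp(tη)v : i ≤ a} and F(t) = span{d^j/dt^j exp(tη)w : j ≤ b} are orthogonal whenever a + b ≤ k. -/

import Mathlib

open Matrix

namespace Stmt13Aux

variable {m : ℕ}

lemma comm_exp_gen (η B : Matrix (Fin m) (Fin m) ℂ) (s : ℂ) (h : Commute η B) :
    NormedSpace.exp (s • η) * B = B * NormedSpace.exp (s • η) :=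
  ((h.smul_left s).exp_left).eq

lemma comm_exp (η : Matrix (Fin m) (Fin m) ℂ) (s : ℂ) :
    NormedSpace.exp (s • η) * η = η * NormedSpace.exp (s • η) :=
  comm_exp_gen η η s (Commute.refl η)

/-- evaluation of `mulVec` at a fixed vector/index, as a linear map in the matrix. -/
noncomputable def evalLM (v : Fin m → ℂ) (idx : Fin m) :
    Matrix (Fin m) (Fin m) ℂ →ₗ[ℂ] ℂ where
  toFun M := M.mulVec v idx
  map_add' M N := by simp [Matrix.add_mulVec]
  map_smul' c M := by simp [Matrix.smul_mulVec]

lemma hasDerivAt_entry (η : Matrix (Fin m) (Fin m) ℂ) (v : Fin m → ℂ) (idx : Fin m) (t : ℂ) :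
    HasDerivAt (fun s : ℂ => (NormedSpace.exp (s • η)).mulVec v idx)
      ((η * NormedSpace.exp (t • η)).mulVec v idx) t := by
  letI : NormedRing (Matrix (Fin m) (Fin m) ℂ) := Matrix.linftyOpNormedRing
  letI : NormedAlgebra ℂ (Matrix (Fin m) (Fin m) ℂ) := Matrix.linftyOpNormedAlgebra
  have h1 : HasDerivAt (fun s : ℂ => NormedSpace.exp (s • η))
      (η * NormedSpace.exp (t • η)) t := hasDerivAt_exp_smul_const' η t
  exact ((evalLM v idx).toContinuousLinearMap.hasFDerivAt
      (x := NormedSpace.exp (t • η))).comp_hasDerivAt t h1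

lemma iteratedDeriv_entry (η : Matrix (Fin m) (Fin m) ℂ) (t : ℂ) (idx : Fin m) :
    ∀ (i : ℕ) (v : Fin m → ℂ),
      iteratedDeriv i (fun s : ℂ => (NormedSpace.exp (s • η)).mulVec v idx) t
        = ((η ^ i * NormedSpace.exp (t • η)).mulVec v) idx := by
  intro i
  induction i with
  | zero => intro v; simp [iteratedDeriv_zero]
  | succ n ih =>
    intro v
    rw [iteratedDeriv_succ']
    have hder : (deriv fun s : ℂ => (NormedSpace.exp (s • η)).mulVec v idx)
        = fun s : ℂ => (NormedSpace.exp (s • η)).mulVec (η.mulVec v) idx := by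
      funext s
      rw [(hasDerivAt_entry η v idx s).deriv, ← comm_exp, ← Matrix.mulVec_mulVec]
    rw [hder, ih (η.mulVec v), Matrix.mulVec_mulVec, mul_assoc, comm_exp, ← mul_assoc,
      ← pow_succ]

lemma exp_nilpotent_sum (N : ℕ) (M : Matrix (Fin m) (Fin m) ℂ) (hM : M ^ N = 0) (c : ℂ) :
    NormedSpace.exp (c • M)
      = ∑ n ∈ Finset.range N, ((Nat.factorial n : ℂ)⁻¹ * c ^ n) • M ^ n := by
  rw [NormedSpace.exp_eq_tsum ℂ]
  dsimp only
  rw [tsum_eq_sum (s := Finset.range N) (f := fun n : ℕ => ((Nat.factorial n : ℂ)⁻¹) • (c • M) ^ n)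
    (fun n hn => by
      have hle : N ≤ n := le_of_not_gt (fun h => hn (Finset.mem_range.mpr h))
      rw [smul_pow, pow_eq_zero_of_le hle hM, smul_zero, smul_zero])]
  refine Finset.sum_congr rfl fun n _ => ?_
  rw [smul_pow, smul_smul]

lemma transpose_pow_mul (A η : Matrix (Fin m) (Fin m) ℂ)
    (hη : η.transpose * A + A * η = 0) (n : ℕ) :
    (η ^ n)ᵀ * A = ((-1 : ℂ) ^ n) • (A * η ^ n) := by
  have h1 : ηᵀ * A = -(A * η) := eq_neg_of_add_eq_zero_left hη
  induction n with
  | zero => simp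
  | succ n ih =>
    rw [pow_succ, Matrix.transpose_mul, mul_assoc, ih, mul_smul_comm, ← mul_assoc, h1,
      pow_succ']
    rw [neg_mul, mul_assoc, smul_neg, neg_one_mul, neg_smul, neg_inj, ← pow_succ', ← pow_succ]

lemma expT_mul (A η : Matrix (Fin m) (Fin m) ℂ)
    (hη : η.transpose * A + A * η = 0) (hnil : IsNilpotent η) (t : ℂ) :
    (NormedSpace.exp (t • η))ᵀ * A = A * NormedSpace.exp ((-t) • η) := by
  obtain ⟨N, hN⟩ := hnil
  have hNT : (ηᵀ) ^ N = 0 := by rw [← Matrix.transpose_pow, hN, Matrix.transpose_zero]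
  rw [← Matrix.exp_transpose, Matrix.transpose_smul, exp_nilpotent_sum N ηᵀ hNT t,
    exp_nilpotent_sum N η hN (-t), Finset.sum_mul, Finset.mul_sum]
  refine Finset.sum_congr rfl fun n _ => ?_
  rw [smul_mul_assoc, ← Matrix.transpose_pow, transpose_pow_mul A η hη n, smul_smul,
    mul_smul_comm]
  congr 1
  ring

lemma form_preserved (A η : Matrix (Fin m) (Fin m) ℂ)
    (hη : η.transpose * A + A * η = 0) (hnil : IsNilpotent η) (t : ℂ) :
    (NormedSpace.exp (t • η))ᵀ * A * NormedSpace.exp (t • η) = A := by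
  rw [expT_mul A η hη hnil t, mul_assoc]
  have h4 : ((-t) • η) + (t • η) = 0 := by rw [← add_smul]; simp
  have h5 := Matrix.exp_add_of_commute ((-t) • η) (t • η)
    (((Commute.refl η).smul_left (-t)).smul_right t)
  rw [h4, NormedSpace.exp_zero] at h5
  rw [← h5, mul_one]

lemma core (A η : Matrix (Fin m) (Fin m) ℂ)
    (hη : η.transpose * A + A * η = 0) (hnil : IsNilpotent η)
    (v w : Fin m → ℂ) (k : ℕ)
    (hvw : ∀ i j : ℕ, i + j ≤ k →
      dotProduct ((η ^ i).mulVec v) (A.mulVec ((η ^ j).mulVec w)) = 0)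
    (t : ℂ) (p q : ℕ) (hpq : p + q ≤ k) :
    dotProduct ((η ^ p * NormedSpace.exp (t • η)).mulVec v)
      (A.mulVec ((η ^ q * NormedSpace.exp (t • η)).mulVec w)) = 0 := by
  set E := NormedSpace.exp (t • η) with hE
  have hcomm : E * η ^ (p + q) = η ^ (p + q) * E :=
    comm_exp_gen η (η ^ (p + q)) t ((Commute.refl η).pow_right (p + q))
  have hid : (η ^ p * E)ᵀ * (A * (η ^ q * E)) = ((-1 : ℂ) ^ p) • (A * η ^ (p + q)) := by
    rw [Matrix.transpose_mul, mul_assoc, ← mul_assoc ((η ^ p)ᵀ) A,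
      transpose_pow_mul A η hη p, smul_mul_assoc, mul_smul_comm]
    congr 1
    have : A * η ^ p * (η ^ q * E) = A * (E * η ^ (p + q)) := by
      rw [hcomm, mul_assoc, ← mul_assoc (η ^ p), ← pow_add]
    rw [this, ← mul_assoc, ← mul_assoc, form_preserved A η hη hnil t]
  rw [Matrix.mulVec_mulVec, Matrix.dotProduct_mulVec, Matrix.vecMul_mulVec, hid]
  have h0 := hvw 0 (p + q) (by simpa using hpq)
  rw [pow_zero, Matrix.one_mulVec, Matrix.mulVec_mulVec, Matrix.dotProduct_mulVec] at h0
  have hsm : v ᵥ* (((-1 : ℂ) ^ p) • (A * η ^ (p + q))) = ((-1 : ℂ) ^ p) • (v ᵥ* (A * η ^ (p + q))) := by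
    ext i
    simp [Matrix.vecMul, dotProduct, Finset.mul_sum, mul_assoc, mul_left_comm]
  rw [hsm, smul_dotProduct, h0, smul_zero]

end Stmt13Aux

/-- Orthogonality relations among `η`-iterates of `v` and `w` propagate to
the osculating spaces of the orbit curves `exp(tη)v` and `exp(tη)w`. -/
theorem stmt13 (m : ℕ) (A η : Matrix (Fin m) (Fin m) ℂ)
    (hη : η.transpose * A + A * η = 0) (hnil : IsNilpotent η)
    (v w : Fin m → ℂ) (k : ℕ)
    (hvw : ∀ i j : ℕ, i + j ≤ k →
      dotProduct ((η ^ i).mulVec v) (A.mulVec ((η ^ j).mulVec w)) = 0)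
    (t : ℂ) (a b : ℕ) (hab : a + b ≤ k) :
    ∀ x ∈ Submodule.span ℂ (Set.range fun (i : Fin (a + 1)) =>
        fun idx : Fin m => iteratedDeriv (i : ℕ)
          (fun s => (NormedSpace.exp (s • η)).mulVec v idx) t),
      ∀ y ∈ Submodule.span ℂ (Set.range fun (j : Fin (b + 1)) =>
        fun idx : Fin m => iteratedDeriv (j : ℕ)
          (fun s => (NormedSpace.exp (s • η)).mulVec w idx) t),
        dotProduct x (A.mulVec y) = 0 := by
  intro x hx y hy
  have gen : ∀ (u : Fin m → ℂ) (i : ℕ),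
      (fun idx : Fin m => iteratedDeriv i
        (fun s => (NormedSpace.exp (s • η)).mulVec u idx) t)
      = (η ^ i * NormedSpace.exp (t • η)).mulVec u :=
    fun u i => funext fun idx => Stmt13Aux.iteratedDeriv_entry η t idx i u
  have hxy : ∀ (x0 : Fin m → ℂ),
      (∀ j : Fin (b + 1), dotProduct x0
        (A.mulVec ((η ^ (j : ℕ) * NormedSpace.exp (t • η)).mulVec w)) = 0) →
      dotProduct x0 (A.mulVec y) = 0 := by
    intro x0 h0
    let L : (Fin m → ℂ) →ₗ[ℂ] ℂ :=
      { toFun := fun z => dotProduct x0 (A.mulVec z)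
        map_add' := fun p q => by simp [Matrix.mulVec_add, dotProduct_add]
        map_smul' := fun c p => by simp [Matrix.mulVec_smul, dotProduct_smul] }
    have hle : Submodule.span ℂ (Set.range fun (j : Fin (b + 1)) =>
        fun idx : Fin m => iteratedDeriv (j : ℕ)
          (fun s => (NormedSpace.exp (s • η)).mulVec w idx) t) ≤ LinearMap.ker L := by
      rw [Submodule.span_le]
      rintro _ ⟨j, rfl⟩
      have := h0 j
      rw [← gen w (j : ℕ)] at this
      exact this
    exact hle hy
  let R : (Fin m → ℂ) →ₗ[ℂ] ℂ :=
    { toFun := fun z => dotProduct z (A.mulVec y)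
      map_add' := fun p q => by simp [add_dotProduct]
      map_smul' := fun c p => by simp [smul_dotProduct] }
  have hle : Submodule.span ℂ (Set.range fun (i : Fin (a + 1)) =>
      fun idx : Fin m => iteratedDeriv (i : ℕ)
        (fun s => (NormedSpace.exp (s • η)).mulVec v idx) t) ≤ LinearMap.ker R := by
    rw [Submodule.span_le]
    rintro _ ⟨i, rfl⟩
    show R _ = 0
    dsimp only [R]
    rw [gen v (i : ℕ)]
    apply hxy
    intro j
    exact Stmt13Aux.core A η hη hnil v w k hvw t (i : ℕ) (j : ℕ)
      (le_trans (Nat.add_le_add (Fin.is_le i) (Fin.is_le j)) hab)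
  exact hle hx
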